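/- For every real ε > 0 there exists N such that for every integer n ≥ N and every integer ℓ with 1 ≤ ℓ ≤ n - 1, one has Σ_{k=1}^{n-1} Fix(n,ℓ,k) ≤ ε · C(n,ℓ) (as real numbers). That is, the total number of configurations in S(n,ℓ) fixed by some fixed nontrivial rotation, summed over all nontrivial rotations, is asymptotically negligible compared with C(n,ℓ), uniformly in ℓ. -/

import Mathlib

/-- Rotation of a configuration `v : ZMod n → Bool` by `k`: `(k • v) i = v (i - k)`. -/
def rot (n : ℕ) (k : ZMod n) (v : ZMod n → Bool) : ZMod n → Bool :=
  fun i => v (i - k)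

/-- The set of configurations with exactly `ℓ` entries equal to `true`. -/
def Sconf (n ℓ : ℕ) [NeZero n] : Finset (ZMod n → Bool) :=
  Finset.univ.filter fun v => (Finset.univ.filter fun i => v i = true).card = ℓ

/-- The rotation orbit of a configuration. -/
def orbitOf (n : ℕ) [NeZero n] (v : ZMod n → Bool) : Finset (ZMod n → Bool) :=
  Finset.univ.image fun k : ZMod n => rot n k v

/-- The number of rotation orbits on `Sconf n ℓ`. -/
def Orb (n ℓ : ℕ) [NeZero n] : ℕ := ((Sconf n ℓ).image (orbitOf n)).card

/-- The number of configurations in `Sconf n ℓ` fixed by rotation by `k`. -/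
def FixCount (n ℓ : ℕ) [NeZero n] (k : ZMod n) : ℕ :=
  ((Sconf n ℓ).filter fun v => rot n k v = v).card

section aux
set_option linter.unusedSectionVars false
variable {n : ℕ} [NeZero n]

lemma shift_of_rot {k : ZMod n} {v : ZMod n → Bool} (h : rot n k v = v) :
    ∀ c : ℕ, ∀ i : ZMod n, v (i - (c : ZMod n) * k) = v i := by
  intro c
  induction c with
  | zero => simp
  | succ c ih =>
    intro i
    have h1 : v (i - (c : ZMod n) * k - k) = v (i - (c : ZMod n) * k) :=
      congrFun h (i - (c : ZMod n) * k)
    have : i - ((c : ZMod n) + 1) * k = i - (c : ZMod n) * k - k := by ring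
    rw [Nat.cast_succ, this, h1, ih]

lemma rot_gcd {k : ℕ} {v : ZMod n → Bool} (h : rot n (k : ZMod n) v = v) :
    ∀ i : ZMod n, v (i - ((Nat.gcd n k : ℕ) : ZMod n)) = v i := by
  intro i
  have hb : ((Nat.gcd n k : ℕ) : ZMod n) = (k : ZMod n) * ((Nat.gcdB n k : ℤ) : ZMod n) := by
    have := Nat.gcd_eq_gcd_ab n k
    have : ((Nat.gcd n k : ℤ) : ZMod n) = ((n * Nat.gcdA n k + k * Nat.gcdB n k : ℤ) : ZMod n) := by
      rw [← this]
    push_cast at this ⊢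
    simpa using this
  set B : ZMod n := ((Nat.gcdB n k : ℤ) : ZMod n) with hB
  have hBv : (B.val : ZMod n) = B := ZMod.natCast_zmod_val B
  rw [hb, ← hBv, mul_comm]
  exact shift_of_rot h B.val i

lemma const_on_classes {d : ℕ} {v : ZMod n → Bool} (hd : 0 < d)
    (h : ∀ i : ZMod n, v (i - (d : ZMod n)) = v i) (i : ZMod n) :
    v ((i.val % d : ℕ) : ZMod n) = v i := by
  have key : ∀ c : ℕ, ∀ j : ZMod n, v (j - (c : ZMod n) * (d : ZMod n)) = v j := by
    intro c
    induction c with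
    | zero => simp
    | succ c ih =>
      intro j
      have h1 := h (j - (c : ZMod n) * d)
      have e : j - ((c : ZMod n) + 1) * d = j - (c : ZMod n) * d - d := by ring
      rw [Nat.cast_succ, e, h1, ih]
  have hv : ((i.val % d : ℕ) : ZMod n) = i - ((i.val / d : ℕ) : ZMod n) * (d : ZMod n) := by
    have hn : i.val % d + d * (i.val / d) = i.val := Nat.mod_add_div _ _
    have : ((i.val % d + d * (i.val / d) : ℕ) : ZMod n) = ((i.val : ℕ) : ZMod n) := by rw [hn]
    push_cast at this
    rw [ZMod.natCast_zmod_val] at this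
    linear_combination this
  rw [hv]
  exact key _ i

lemma keybound {d j r : ℕ} (hd : d ∣ n) (hj : j < n / d) (hr : r < d) : r + j * d < n := by
  have h2 : (j+1) * d ≤ (n/d) * d := Nat.mul_le_mul_right d (Nat.succ_le_of_lt hj)
  rw [add_mul, one_mul, Nat.div_mul_cancel hd] at h2
  omega

lemma fiber_card {d : ℕ} (hd : d ∣ n) (hdpos : 0 < d) {r : ℕ} (hr : r < d) :
    (Finset.univ.filter fun i : ZMod n => i.val % d = r).card = n / d := by
  rw [← Finset.card_range (n / d)]
  apply Finset.card_bij' (fun i _ => i.val / d)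
    (fun j _ => ((r + j * d : ℕ) : ZMod n))
  · intro i hi
    simp only [Finset.mem_filter, Finset.mem_univ, true_and] at hi
    simp only [Finset.mem_range]
    have h1 : i.val < n := ZMod.val_lt i
    have h2 : d * (n / d) = n := Nat.mul_div_cancel' hd
    exact Nat.div_lt_of_lt_mul (by omega)
  · intro j hj
    simp only [Finset.mem_range] at hj
    simp only [Finset.mem_filter, Finset.mem_univ, true_and]
    rw [ZMod.val_cast_of_lt (keybound hd hj hr)]
    simp [Nat.add_mul_mod_self_right, Nat.mod_eq_of_lt hr]
  · intro i hi
    simp only [Finset.mem_filter, Finset.mem_univ, true_and] at hi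
    have : r + (i.val / d) * d = i.val := by rw [← hi, Nat.mod_add_div']
    rw [this, ZMod.natCast_zmod_val]
  · intro j hj
    simp only [Finset.mem_range] at hj
    rw [ZMod.val_cast_of_lt (keybound hd hj hr)]
    rw [Nat.add_mul_div_right _ _ hdpos, Nat.div_eq_of_lt hr, zero_add]

lemma class_count {d : ℕ} (hd : d ∣ n) (hdpos : 0 < d) {v : ZMod n → Bool}
    (hc : ∀ i : ZMod n, v ((i.val % d : ℕ) : ZMod n) = v i) :
    (Finset.univ.filter fun i : ZMod n => v i = true).card
      = (n / d) * ((Finset.range d).filter fun r => v ((r : ℕ) : ZMod n) = true).card := by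
  rw [Finset.card_eq_sum_card_fiberwise (f := fun i : ZMod n => i.val % d)
      (t := Finset.range d) (fun i _ => Finset.mem_range.mpr (Nat.mod_lt _ hdpos))]
  have hfib : ∀ b ∈ Finset.range d,
      ((Finset.univ.filter fun i : ZMod n => v i = true).filter fun a => a.val % d = b).card
        = if v ((b : ℕ) : ZMod n) = true then n / d else 0 := by
    intro b hb
    have hbd := Finset.mem_range.mp hb
    by_cases hvb : v ((b : ℕ) : ZMod n) = true
    · rw [if_pos hvb, ← fiber_card hd hdpos hbd]
      congr 1
      ext i
      simp only [Finset.mem_filter, Finset.mem_univ, true_and]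
      constructor
      · exact fun h => h.2
      · intro h
        refine ⟨?_, h⟩
        rw [← hc i, h]
        exact hvb
    · rw [if_neg hvb]
      rw [Finset.card_eq_zero]
      ext i
      simp only [Finset.mem_filter, Finset.mem_univ, true_and, Finset.notMem_empty, iff_false,
        not_and]
      intro hvi hmod
      exact hvb (by rw [← hmod, hc i]; exact hvi)
  rw [Finset.sum_congr rfl hfib, ← Finset.sum_filter, Finset.sum_const, smul_eq_mul, mul_comm]

lemma small_filter {d : ℕ} (hdn : d ≤ n) {b : ℕ} (hb : b < d) :
    (Finset.univ.filter fun i : ZMod n => i.val % d = b ∧ i.val < d) = {((b : ℕ) : ZMod n)} := by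
  ext i
  simp only [Finset.mem_filter, Finset.mem_univ, true_and, Finset.mem_singleton]
  constructor
  · rintro ⟨h1, h2⟩
    have : i.val = b := by rw [← h1, Nat.mod_eq_of_lt h2]
    rw [← this, ZMod.natCast_zmod_val]
  · rintro rfl
    have hval : (((b : ℕ) : ZMod n)).val = b := ZMod.val_cast_of_lt (lt_of_lt_of_le hb hdn)
    rw [hval]
    exact ⟨Nat.mod_eq_of_lt hb, hb⟩

lemma combine_count {d : ℕ} (hd : d ∣ n) (hdpos : 0 < d) (h2 : 2 ≤ n / d)
    {ℓ : ℕ} {v w : ZMod n → Bool}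
    (hcv : ∀ i : ZMod n, v ((i.val % d : ℕ) : ZMod n) = v i)
    (hcw : ∀ i : ZMod n, w ((i.val % d : ℕ) : ZMod n) = w i)
    (hv : (Finset.univ.filter fun i : ZMod n => v i = true).card = ℓ)
    (hw : (Finset.univ.filter fun i : ZMod n => w i = true).card = ℓ) :
    (Finset.univ.filter fun i : ZMod n =>
      (if i.val < d then v i else w i) = true).card = ℓ := by
  classical
  have hdn : d ≤ n := Nat.le_of_dvd (Nat.pos_of_ne_zero (NeZero.ne n)) hd
  set u : ZMod n → Bool := fun i => if i.val < d then v i else w i with hu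
  set mv := ((Finset.range d).filter fun r => v ((r : ℕ) : ZMod n) = true).card with hmv
  set mw := ((Finset.range d).filter fun r => w ((r : ℕ) : ZMod n) = true).card with hmw
  have hv' : (n / d) * mv = ℓ := by rw [← hv, class_count hd hdpos hcv]
  have hw' : (n / d) * mw = ℓ := by rw [← hw, class_count hd hdpos hcw]
  have hmvw : mv = mw := Nat.eq_of_mul_eq_mul_left (by omega) (hv'.trans hw'.symm)
  rw [Finset.card_eq_sum_card_fiberwise (f := fun i : ZMod n => i.val % d)
      (t := Finset.range d) (fun i _ => Finset.mem_range.mpr (Nat.mod_lt _ hdpos))]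
  have hfib : ∀ b ∈ Finset.range d,
      ((Finset.univ.filter fun i : ZMod n => u i = true).filter fun a => a.val % d = b).card
        = (if v ((b : ℕ) : ZMod n) = true then 1 else 0)
          + (if w ((b : ℕ) : ZMod n) = true then n / d - 1 else 0) := by
    intro b hb
    have hbd := Finset.mem_range.mp hb
    have hbig : (Finset.univ.filter fun i : ZMod n => i.val % d = b ∧ ¬ i.val < d).card
        = n / d - 1 := by
      have hsplit := Finset.card_filter_add_card_filter_not
        (s := Finset.univ.filter fun i : ZMod n => i.val % d = b)
        (p := fun i : ZMod n => i.val < d)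
      simp only [Finset.filter_filter] at hsplit
      rw [small_filter hdn hbd, fiber_card hd hdpos hbd] at hsplit
      simp only [Finset.card_singleton] at hsplit
      omega
    rw [Finset.filter_filter]
    have hsplit := Finset.card_filter_add_card_filter_not
      (s := Finset.univ.filter fun i : ZMod n => u i = true ∧ i.val % d = b)
      (p := fun i : ZMod n => i.val < d)
    simp only [Finset.filter_filter] at hsplit
    have e1 : (Finset.univ.filter fun i : ZMod n => (u i = true ∧ i.val % d = b) ∧ i.val < d)
        = if v ((b : ℕ) : ZMod n) = true then {((b : ℕ) : ZMod n)} else ∅ := by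
      ext i
      simp only [Finset.mem_filter, Finset.mem_univ, true_and]
      by_cases hvb : v ((b : ℕ) : ZMod n) = true
      · rw [if_pos hvb]
        simp only [Finset.mem_singleton]
        constructor
        · rintro ⟨⟨_, h1⟩, h2⟩
          have : i.val = b := by rw [← h1, Nat.mod_eq_of_lt h2]
          rw [← this, ZMod.natCast_zmod_val]
        · rintro rfl
          have hval : (((b : ℕ) : ZMod n)).val = b := ZMod.val_cast_of_lt (lt_of_lt_of_le hbd hdn)
          refine ⟨⟨?_, by rw [hval]; exact Nat.mod_eq_of_lt hbd⟩, by rw [hval]; exact hbd⟩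
          show (if (((b : ℕ) : ZMod n)).val < d then v _ else w _) = true
          rw [hval, if_pos hbd]
          exact hvb
      · rw [if_neg hvb]
        simp only [Finset.notMem_empty, iff_false, not_and]
        rintro ⟨hui, h1⟩ h2
        have hib : i.val = b := by rw [← h1, Nat.mod_eq_of_lt h2]
        apply hvb
        have h3 : u i = v i := by
          show (if i.val < d then v i else w i) = v i
          rw [if_pos h2]
        rw [← hib, ZMod.natCast_zmod_val, ← h3, hui]
    have e2 : (Finset.univ.filter fun i : ZMod n => (u i = true ∧ i.val % d = b) ∧ ¬ i.val < d)
        = if w ((b : ℕ) : ZMod n) = true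
          then Finset.univ.filter fun i : ZMod n => i.val % d = b ∧ ¬ i.val < d
          else ∅ := by
      ext i
      simp only [Finset.mem_filter, Finset.mem_univ, true_and]
      have huw : ∀ j : ZMod n, ¬ j.val < d → j.val % d = b → (u j = w ((b:ℕ) : ZMod n)) := by
        intro j hj hjb
        have h3 : u j = w j := by
          show (if j.val < d then v j else w j) = w j
          rw [if_neg hj]
        rw [h3, ← hcw j, hjb]
      by_cases hwb : w ((b : ℕ) : ZMod n) = true
      · rw [if_pos hwb]
        simp only [Finset.mem_filter, Finset.mem_univ, true_and]
        constructor
        · rintro ⟨⟨_, h1⟩, h2⟩; exact ⟨h1, h2⟩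
        · rintro ⟨h1, h2⟩
          exact ⟨⟨by rw [huw i h2 h1]; exact hwb, h1⟩, h2⟩
      · rw [if_neg hwb]
        simp only [Finset.notMem_empty, iff_false, not_and]
        rintro ⟨hui, h1⟩ h2
        exact hwb (by rw [← huw i h2 h1]; exact hui)
    rw [e1, e2] at hsplit
    rw [apply_ite Finset.card, apply_ite Finset.card, hbig, Finset.card_singleton,
      Finset.card_empty] at hsplit
    exact hsplit.symm
  rw [Finset.sum_congr rfl hfib, Finset.sum_add_distrib]
  rw [← Finset.sum_filter, ← Finset.sum_filter]
  simp only [Finset.sum_const, smul_eq_mul, mul_one]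
  rw [← hmv, ← hmw, ← hmvw]
  calc mv + mv * (n / d - 1) = mv * (n / d) := by
        rw [Nat.mul_sub_one]
        have : mv ≤ mv * (n/d) := Nat.le_mul_of_pos_right _ (by omega)
        omega
  _ = ℓ := by rw [mul_comm]; exact hv'

lemma card_Sconf (ℓ : ℕ) : (Sconf n ℓ).card = n.choose ℓ := by
  classical
  have h : ((Finset.univ : Finset (ZMod n)).powersetCard ℓ).card = n.choose ℓ := by
    rw [Finset.card_powersetCard, Finset.card_univ, ZMod.card]
  rw [← h]
  refine Finset.card_bij' (fun v _ => Finset.univ.filter fun i => v i = true)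
    (fun S _ => fun i => decide (i ∈ S)) ?_ ?_ ?_ ?_
  · intro v hv
    simp only [Sconf, Finset.mem_filter, Finset.mem_univ, true_and] at hv
    simp only [Finset.mem_powersetCard]
    exact ⟨Finset.filter_subset _ _ |>.trans (by simp), hv⟩
  · intro S hS
    simp only [Finset.mem_powersetCard] at hS
    simp only [Sconf, Finset.mem_filter, Finset.mem_univ, true_and]
    rw [← hS.2]
    congr 1
    ext i
    simp
  · intro v hv
    funext i
    simp
  · intro S hS
    ext i
    simp

lemma fix_sq_le {ℓ k : ℕ} (hk1 : 1 ≤ k) (hk2 : k ≤ n - 1) :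
    FixCount n ℓ (k : ZMod n) ^ 2 ≤ n.choose ℓ := by
  classical
  have hn : 0 < n := Nat.pos_of_ne_zero (NeZero.ne n)
  set d := Nat.gcd n k with hdd
  have hd : d ∣ n := Nat.gcd_dvd_left n k
  have hdpos : 0 < d := Nat.gcd_pos_of_pos_left _ (by omega)
  have hdk : d ∣ k := Nat.gcd_dvd_right n k
  have hdlt : d < n := lt_of_le_of_lt (Nat.le_of_dvd (by omega) hdk) (by omega)
  have hdn : d ≤ n := le_of_lt hdlt
  have hq2 : 2 ≤ n / d := by
    rcases Nat.lt_or_ge (n / d) 2 with h | h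
    · exfalso
      have hmul : d * (n / d) = n := Nat.mul_div_cancel' hd
      interval_cases h' : (n / d) <;> omega
    · exact h
  have h2d : 2 * d ≤ n := by
    have hmul : d * (n / d) = n := Nat.mul_div_cancel' hd
    calc 2 * d = d * 2 := by ring
    _ ≤ d * (n / d) := Nat.mul_le_mul_left d hq2
    _ = n := hmul
  set F := (Sconf n ℓ).filter (fun v => rot n (k : ZMod n) v = v) with hF
  have hconst : ∀ v ∈ F, ∀ i : ZMod n, v ((i.val % d : ℕ) : ZMod n) = v i := by
    intro v hv i
    simp only [hF, Finset.mem_filter] at hv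
    exact const_on_classes hdpos (rot_gcd hv.2) i
  have hmem : ∀ v ∈ F, (Finset.univ.filter fun i : ZMod n => v i = true).card = ℓ := by
    intro v hv
    simp only [hF, Sconf, Finset.mem_filter, Finset.mem_univ, true_and] at hv
    exact hv.1
  have hinj : (F ×ˢ F).card ≤ (Sconf n ℓ).card := by
    apply Finset.card_le_card_of_injOn
      (fun p => fun i : ZMod n => if i.val < d then p.1 i else p.2 i)
    · rintro ⟨v, w⟩ hp
      simp only [Finset.mem_coe, Finset.mem_product] at hp
      simp only [Finset.mem_coe, Sconf, Finset.mem_filter, Finset.mem_univ, true_and]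
      exact combine_count hd hdpos hq2 (hconst v hp.1) (hconst w hp.2) (hmem v hp.1) (hmem w hp.2)
    · rintro ⟨v, w⟩ hp ⟨v', w'⟩ hp' heq
      simp only [Finset.mem_coe, Finset.mem_product] at hp hp'
      have hval_small : ∀ i : ZMod n, (((i.val % d : ℕ) : ZMod n)).val = i.val % d := fun i =>
        ZMod.val_cast_of_lt (lt_of_lt_of_le (Nat.mod_lt _ hdpos) hdn)
      have hval_big : ∀ i : ZMod n, (((i.val % d + d : ℕ) : ZMod n)).val = i.val % d + d := by
        intro i
        exact ZMod.val_cast_of_lt (by have := Nat.mod_lt i.val hdpos; omega)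
      have hcond : ∀ i : ZMod n, (((i.val % d : ℕ) : ZMod n)).val < d := by
        intro i; rw [hval_small i]; exact Nat.mod_lt _ hdpos
      have hcond2 : ∀ i : ZMod n, ¬ (((i.val % d + d : ℕ) : ZMod n)).val < d := by
        intro i; rw [hval_big i]; omega
      have hbigpt : ∀ (a : ZMod n → Bool), (∀ i : ZMod n, a ((i.val % d : ℕ) : ZMod n) = a i) →
          ∀ i : ZMod n, a ((i.val % d + d : ℕ) : ZMod n) = a i := by
        intro a hca i
        have h1 := hca ((i.val % d + d : ℕ) : ZMod n)
        rw [hval_big i, Nat.add_mod_right, Nat.mod_mod_of_dvd _ (dvd_refl d)] at h1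
        rw [← h1, hca i]
      have ev : v = v' := by
        funext i
        have h1 := congrFun heq ((i.val % d : ℕ) : ZMod n)
        simp only at h1
        rw [if_pos (hcond i), if_pos (hcond i)] at h1
        calc v i = v ((i.val % d : ℕ) : ZMod n) := (hconst v hp.1 i).symm
        _ = v' ((i.val % d : ℕ) : ZMod n) := h1
        _ = v' i := hconst v' hp'.1 i
      have ew : w = w' := by
        funext i
        have h1 := congrFun heq ((i.val % d + d : ℕ) : ZMod n)
        simp only at h1
        rw [if_neg (hcond2 i), if_neg (hcond2 i)] at h1
        calc w i = w ((i.val % d + d : ℕ) : ZMod n) := (hbigpt w (hconst w hp.2) i).symm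
        _ = w' ((i.val % d + d : ℕ) : ZMod n) := h1
        _ = w' i := hbigpt w' (hconst w' hp'.2) i
      rw [ev, ew]
  rw [Finset.card_product] at hinj
  rw [card_Sconf] at hinj
  simpa [FixCount, pow_two] using hinj

lemma dvd_of_fix_ne {ℓ k : ℕ} (hk : FixCount n ℓ ((k : ℕ) : ZMod n) ≠ 0) : n ∣ ℓ * k := by
  classical
  obtain ⟨v, hv⟩ := (Finset.card_ne_zero.mp hk).exists_mem
  simp only [Finset.mem_filter, Sconf, Finset.mem_univ, true_and] at hv
  obtain ⟨hcard, hrot⟩ := hv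
  set T := Finset.univ.filter fun i : ZMod n => v i = true with hT
  have hshift : ∀ i : ZMod n, v (i - (k : ZMod n)) = v i := fun i => congrFun hrot i
  have himg : T.image (· + (k : ZMod n)) = T := by
    ext j
    simp only [hT, Finset.mem_image, Finset.mem_filter, Finset.mem_univ, true_and]
    constructor
    · rintro ⟨i, hi, rfl⟩
      rw [← hshift (i + (k : ZMod n))]
      simpa using hi
    · intro hj
      exact ⟨j - (k : ZMod n), by rw [hshift j]; exact hj, by ring⟩
  have hs2 : ∑ x ∈ T.image (· + (k : ZMod n)), x = ∑ x ∈ T, (x + (k : ZMod n)) :=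
    Finset.sum_image (fun a _ b _ h => by simpa using h)
  rw [himg] at hs2
  rw [Finset.sum_add_distrib, Finset.sum_const, hcard] at hs2
  have hz : (ℓ : ZMod n) * (k : ZMod n) = 0 := by
    have h0 : ℓ • (k : ZMod n) = 0 := by
      exact (left_eq_add.mp hs2).symm ▸ rfl
    rw [← h0, nsmul_eq_mul]
  rw [← ZMod.natCast_eq_zero_iff]
  push_cast
  exact hz

end aux

lemma support_card {n ℓ : ℕ} (hn : 0 < n) (h1 : 1 ≤ ℓ) (h2 : ℓ ≤ n - 1) :
    ((Finset.Icc 1 (n-1)).filter fun k => n ∣ ℓ * k).card ≤ min ℓ (n - ℓ) := by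
  classical
  set g := Nat.gcd n ℓ with hg
  have hgpos : 0 < g := Nat.gcd_pos_of_pos_left _ hn
  have hgn : g ∣ n := Nat.gcd_dvd_left n ℓ
  have hgl : g ∣ ℓ := Nat.gcd_dvd_right n ℓ
  set s := n / g with hs
  have hspos : 0 < s := Nat.div_pos (Nat.le_of_dvd hn hgn) hgpos
  have hsg : s * g = n := by rw [hs, Nat.div_mul_cancel hgn]
  have hdvd_s : ∀ k ∈ (Finset.Icc 1 (n-1)).filter fun k => n ∣ ℓ * k, s ∣ k := by
    intro k hk
    simp only [Finset.mem_filter, Finset.mem_Icc] at hk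
    obtain ⟨⟨hk1, hk2⟩, hdvd⟩ := hk
    have hco : Nat.Coprime s (ℓ / g) := Nat.coprime_div_gcd_div_gcd hgpos
    have h3 : s ∣ (ℓ / g) * k := by
      have : g * s ∣ g * ((ℓ / g) * k) := by
        rw [mul_comm g s, hsg, ← mul_assoc, Nat.mul_div_cancel' hgl]
        exact hdvd
      exact (mul_dvd_mul_iff_left (by omega : g ≠ 0)).mp this
    rw [mul_comm] at h3
    exact (Nat.Coprime.dvd_mul_right hco).mp h3
  have hinj : ((Finset.Icc 1 (n-1)).filter fun k => n ∣ ℓ * k).card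
      ≤ (Finset.Icc 1 (g - 1)).card := by
    apply Finset.card_le_card_of_injOn (fun k => k / s)
    · intro k hk
      have hsk := hdvd_s k hk
      simp only [Finset.mem_coe, Finset.mem_filter, Finset.mem_Icc] at hk
      obtain ⟨⟨hk1, hk2⟩, _⟩ := hk
      simp only [Finset.mem_coe, Finset.mem_Icc]
      constructor
      · exact Nat.one_le_div_iff hspos |>.mpr (Nat.le_of_dvd (by omega) hsk)
      · by_contra hlt
        push_neg at hlt
        have : g ≤ k / s := by omega
        have : s * g ≤ s * (k / s) := Nat.mul_le_mul_left s this
        rw [hsg, Nat.mul_div_cancel' hsk] at this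
        omega
    · intro a ha b hb hab
      simp only [Finset.mem_coe] at ha hb
      simp only at hab
      have hsa := hdvd_s a ha
      have hsb := hdvd_s b hb
      have : s * (a / s) = s * (b / s) := by rw [hab]
      rw [Nat.mul_div_cancel' hsa, Nat.mul_div_cancel' hsb] at this
      exact this
  have hcard : (Finset.Icc 1 (g - 1)).card = g - 1 := by
    rw [Nat.card_Icc]
    omega
  have hgle : g ≤ ℓ := Nat.le_of_dvd (by omega) hgl
  have hgnl : g ∣ n - ℓ := Nat.dvd_sub hgn hgl
  have hgle2 : g ≤ n - ℓ := Nat.le_of_dvd (by omega) hgnl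
  omega

lemma choose_mono_k {n a b : ℕ} (hab : a ≤ b) (hb : b ≤ n / 2) :
    n.choose a ≤ n.choose b := by
  induction b with
  | zero => simp_all
  | succ b ih =>
    rcases Nat.eq_or_lt_of_le hab with rfl | h
    · exact le_refl _
    · calc n.choose a ≤ n.choose b := ih (by omega) (by omega)
      _ ≤ n.choose (b + 1) := Nat.choose_le_succ_of_lt_half_left (by omega)

lemma two_pow_le_choose (m : ℕ) : 2 ^ m ≤ (2 * m).choose m := by
  induction m with
  | zero => simp
  | succ m ih =>
    have h1 : 2 * (m + 1) = (2 * m + 1) + 1 := by ring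
    rw [h1, Nat.choose_succ_succ]
    have h2 : (2 * m + 1).choose m ≥ (2 * m).choose m := Nat.choose_le_choose m (by omega)
    have h3 : (2 * m + 1).choose (m + 1) = (2 * m + 1).choose m := by
      have e : 2 * m + 1 - m = m + 1 := by omega
      rw [← e]
      exact Nat.choose_symm (by omega)
    calc 2 ^ (m + 1) = 2 ^ m + 2 ^ m := by ring
    _ ≤ (2 * m + 1).choose m + (2 * m + 1).choose (m + 1) := by
        rw [h3]; exact Nat.add_le_add (le_trans ih h2) (le_trans ih h2)

lemma eps_two_pow {δ : ℝ} (hδ : 0 < δ) : ∃ M : ℕ, ∀ m : ℕ, M ≤ m → (m : ℝ)^2 ≤ δ * 2 ^ m := by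
  have h := tendsto_pow_const_div_const_pow_of_one_lt 2 (by norm_num : (1:ℝ) < 2)
  have h2 : ∀ᶠ m : ℕ in Filter.atTop, (m : ℝ)^2 / 2^m < δ := h.eventually_lt_const hδ
  obtain ⟨M, hM⟩ := Filter.eventually_atTop.mp h2
  refine ⟨M, fun m hm => ?_⟩
  have h3 := hM m hm
  have h4 : (0:ℝ) < 2 ^ m := by positivity
  rw [div_lt_iff₀ h4] at h3
  linarith

/-- The total number of configurations fixed by nontrivial rotations is asymptotically
negligible compared with `C(n,ℓ)`, uniformly in `1 ≤ ℓ ≤ n - 1` (Eq. (31) of the paper). -/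
theorem stmt_6 :
    ∀ ε : ℝ, 0 < ε → ∃ N : ℕ, ∀ (n ℓ : ℕ), N ≤ n → ∀ (h1 : 1 ≤ ℓ) (h2 : ℓ ≤ n - 1),
      haveI : NeZero n := ⟨by omega⟩
      ∑ k ∈ Finset.Icc 1 (n - 1), ((FixCount n ℓ (k : ZMod n) : ℕ) : ℝ)
        ≤ ε * ((n.choose ℓ : ℕ) : ℝ) := by
  intro ε hε
  obtain ⟨M, hM⟩ := eps_two_pow (show (0:ℝ) < ε^2 by positivity)
  refine ⟨⌈(M:ℝ)^2 / ε^2⌉₊ + 2*M + 2, fun n ℓ hN h1 h2 => ?_⟩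
  haveI : NeZero n := ⟨by omega⟩
  have hn2 : 2 ≤ n := by omega
  have hℓn : ℓ ≤ n := by omega
  set m := min ℓ (n - ℓ) with hm
  have hm1 : 1 ≤ m := by omega
  have h2m : 2 * m ≤ n := by omega
  have hCeq : n.choose m = n.choose ℓ := by
    rcases min_eq_iff.mp hm.symm |>.imp id id with h | h
    · rw [hm]
      rcases Nat.le_total ℓ (n - ℓ) with hc | hc
      · rw [min_eq_left hc]
      · rw [min_eq_right hc, ← Nat.choose_symm hℓn]
    · rw [hm]
      rcases Nat.le_total ℓ (n - ℓ) with hc | hc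
      · rw [min_eq_left hc]
      · rw [min_eq_right hc, ← Nat.choose_symm hℓn]
  set C : ℕ := n.choose ℓ with hC
  have hCpos : 0 < C := Nat.choose_pos hℓn
  -- `m² ≤ ε² C`
  have key1 : (m:ℝ)^2 ≤ ε^2 * C := by
    have hmono : n.choose m ≤ C := le_of_eq hCeq
    rcases Nat.le_total m M with hcase | hcase
    · -- small m : use `n ≤ choose n m`
      have hn_le : n ≤ n.choose m := by
        have := choose_mono_k (show 1 ≤ m from hm1) (show m ≤ n / 2 by omega)
        simpa [Nat.choose_one_right] using this
      have hnC : (n:ℝ) ≤ C := by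
        exact_mod_cast le_trans hn_le hmono
      have hMn : (M:ℝ)^2 ≤ ε^2 * n := by
        have hceil : ((M:ℝ)^2 / ε^2) ≤ (⌈(M:ℝ)^2 / ε^2⌉₊ : ℝ) := Nat.le_ceil _
        have hNn : ((⌈(M:ℝ)^2 / ε^2⌉₊ : ℕ) : ℝ) ≤ (n:ℝ) := by
          exact_mod_cast le_trans (Nat.le_add_right _ (2*M+2)) hN
        have : (M:ℝ)^2 / ε^2 ≤ (n:ℝ) := le_trans hceil hNn
        calc (M:ℝ)^2 = ((M:ℝ)^2 / ε^2) * ε^2 := by field_simp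
        _ ≤ (n:ℝ) * ε^2 := by nlinarith [sq_nonneg ε]
        _ = ε^2 * n := by ring
      calc (m:ℝ)^2 ≤ (M:ℝ)^2 := by
            have : (m:ℝ) ≤ (M:ℝ) := by exact_mod_cast hcase
            nlinarith [Nat.cast_nonneg (α := ℝ) m]
      _ ≤ ε^2 * n := hMn
      _ ≤ ε^2 * C := by nlinarith [sq_nonneg ε]
    · -- large m : use `2^m ≤ choose (2m) m ≤ choose n m`
      have hpow : (2:ℝ)^m ≤ (C:ℝ) := by
        have h1' : 2^m ≤ (2*m).choose m := two_pow_le_choose m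
        have h2' : (2*m).choose m ≤ n.choose m := Nat.choose_le_choose m h2m
        exact_mod_cast le_trans h1' (le_trans h2' hmono)
      calc (m:ℝ)^2 ≤ ε^2 * 2^m := hM m hcase
      _ ≤ ε^2 * C := by nlinarith [sq_nonneg ε]
  -- each nonzero term is at most `√C`
  have key2 : ∀ k ∈ Finset.Icc 1 (n-1), (FixCount n ℓ ((k:ℕ) : ZMod n) : ℝ) ≤ Real.sqrt C := by
    intro k hk
    simp only [Finset.mem_Icc] at hk
    rw [Real.le_sqrt (by positivity) (by positivity)]
    exact_mod_cast fix_sq_le hk.1 hk.2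
  -- restrict to the support
  set S := (Finset.Icc 1 (n-1)).filter
    (fun k => FixCount n ℓ ((k:ℕ) : ZMod n) ≠ 0) with hS
  have hnat : ∑ k ∈ S, FixCount n ℓ ((k:ℕ) : ZMod n)
      = ∑ k ∈ Finset.Icc 1 (n-1), FixCount n ℓ ((k:ℕ) : ZMod n) := by
    rw [hS]
    exact Finset.sum_filter_ne_zero _
  have hsum_eq : ∑ k ∈ Finset.Icc 1 (n-1), (FixCount n ℓ ((k:ℕ) : ZMod n) : ℝ)
      = ∑ k ∈ S, (FixCount n ℓ ((k:ℕ) : ZMod n) : ℝ) := by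
    have := congrArg (fun x : ℕ => (x : ℝ)) hnat
    push_cast at this
    exact this.symm
  have hcardS : (S.card : ℝ) ≤ (m : ℝ) := by
    have hsub : S ⊆ (Finset.Icc 1 (n-1)).filter fun k => n ∣ ℓ * k := by
      intro k hk
      simp only [hS, Finset.mem_filter] at hk ⊢
      exact ⟨hk.1, dvd_of_fix_ne hk.2⟩
    have := le_trans (Finset.card_le_card hsub) (support_card (by omega) h1 h2)
    exact_mod_cast this
  have hsqrt_nonneg : 0 ≤ Real.sqrt C := Real.sqrt_nonneg _
  have key3 : (m:ℝ) ≤ ε * Real.sqrt C := by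
    have := Real.sqrt_le_sqrt key1
    rw [Real.sqrt_sq (by positivity), Real.sqrt_mul (by positivity), Real.sqrt_sq hε.le] at this
    exact this
  calc ∑ k ∈ Finset.Icc 1 (n-1), (FixCount n ℓ ((k:ℕ) : ZMod n) : ℝ)
      = ∑ k ∈ S, (FixCount n ℓ ((k:ℕ) : ZMod n) : ℝ) := hsum_eq
  _ ≤ S.card • Real.sqrt C := Finset.sum_le_card_nsmul _ _ _
      (fun k hk => key2 k (Finset.mem_of_mem_filter k hk))
  _ = (S.card : ℝ) * Real.sqrt C := by rw [nsmul_eq_mul]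
  _ ≤ (m:ℝ) * Real.sqrt C := by nlinarith
  _ ≤ (ε * Real.sqrt C) * Real.sqrt C := by nlinarith
  _ = ε * (Real.sqrt C * Real.sqrt C) := by ring
  _ = ε * C := by rw [Real.mul_self_sqrt (by positivity)]
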